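/- For every m ≥ 3, an Apollonian network T contains no subgraph isomorphic to the complete bipartite graph K_{2,2m-1} in which the two vertices of the partition set of size two are not adjacent in T. -/

import Mathlib

open SimpleGraph

/-- The complete graph `K4` on the vertices `{0,1,2,3}` of `ℕ`. -/
def K4n : SimpleGraph ℕ where
  Adj x y := x ≠ y ∧ x < 4 ∧ y < 4
  symm := ⟨fun _ _ h => ⟨h.1.symm, h.2.2, h.2.1⟩⟩
  loopless := ⟨fun _ h => h.1 rfl⟩

/-- Add a new apex vertex `v` joined to the three vertices `a`, `b`, `c`. -/
def addApex (G : SimpleGraph ℕ) (v a b c : ℕ) : SimpleGraph ℕ :=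
  G ⊔ SimpleGraph.fromEdgeSet {s(v, a), s(v, b), s(v, c)}

/-- `ApollonianF G Fs` : `G` is an Apollonian network with set of (triangular) faces `Fs`,
built from `K4` by recursively subdividing a triangular face. -/
inductive ApollonianF : SimpleGraph ℕ → Set (Finset ℕ) → Prop
  | base : ApollonianF K4n {{0, 1, 2}, {0, 1, 3}, {0, 2, 3}, {1, 2, 3}}
  | subdivide (G : SimpleGraph ℕ) (Fs : Set (Finset ℕ)) (a b c v : ℕ) :
      ApollonianF G Fs → ({a, b, c} : Finset ℕ) ∈ Fs →
      (∀ y, ¬ G.Adj v y) →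
      ApollonianF (addApex G v a b c)
        ((Fs \ {({a, b, c} : Finset ℕ)}) ∪ {{v, a, b}, {v, a, c}, {v, b, c}})

/-- A graph (on vertex set its support) is an Apollonian network. -/
def IsApollonian (G : SimpleGraph ℕ) : Prop := ∃ Fs, ApollonianF G Fs

/-- The triangles (sets of three pairwise adjacent vertices) of `G`. -/
def triangleSet (G : SimpleGraph ℕ) : Set (Finset ℕ) :=
  {t | ∃ a b c : ℕ, t = {a, b, c} ∧ G.Adj a b ∧ G.Adj a c ∧ G.Adj b c}

/-- A triangle is separating if deleting its vertices disconnects the graph. -/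
def IsSeparatingTriangle (G : SimpleGraph ℕ) (t : Finset ℕ) : Prop :=
  t ∈ triangleSet G ∧ ¬ (G.induce (G.support \ ↑t)).Connected

/-- `G` is (isomorphic to) the complete graph on four vertices. -/
def IsK4Graph (G : SimpleGraph ℕ) : Prop :=
  ∃ s : Finset ℕ, ↑s = G.support ∧ s.card = 4 ∧ ∀ a ∈ s, ∀ b ∈ s, a ≠ b → G.Adj a b

/-- Delete the vertex `v` (and all incident edges). -/
def deleteVertex (G : SimpleGraph ℕ) (v : ℕ) : SimpleGraph ℕ where
  Adj x y := G.Adj x y ∧ x ≠ v ∧ y ≠ v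
  symm := ⟨fun _ _ h => ⟨h.1.symm, h.2.2, h.2.1⟩⟩
  loopless := ⟨fun x h => G.loopless.1 x h.1⟩

lemma addApex_adj {G : SimpleGraph ℕ} {v a b c x y : ℕ} :
    (addApex G v a b c).Adj x y ↔ G.Adj x y ∨ (x ≠ y ∧
      ((x = v ∧ (y = a ∨ y = b ∨ y = c)) ∨ (y = v ∧ (x = a ∨ x = b ∨ x = c)))) := by
  simp only [addApex, SimpleGraph.sup_adj, SimpleGraph.fromEdgeSet_adj,
    Set.mem_insert_iff, Set.mem_singleton_iff, Sym2.eq_iff]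
  tauto

lemma apollonian_key {G : SimpleGraph ℕ} {Fs : Set (Finset ℕ)} (h : ApollonianF G Fs) :
    (∀ t ∈ Fs, ∀ x ∈ t, ∀ y ∈ t, x ≠ y → G.Adj x y) ∧
    (∀ x y : ℕ, x ≠ y → ¬ G.Adj x y → ∀ W : Finset ℕ,
      (∀ w ∈ W, G.Adj x w ∧ G.Adj y w) → W.card ≤ 3) := by
  induction h with
  | base =>
    constructor
    · intro t ht x hx y hy hxy
      simp only [Set.mem_insert_iff, Set.mem_singleton_iff] at ht
      rcases ht with rfl | rfl | rfl | rfl <;>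
        · simp only [Finset.mem_insert, Finset.mem_singleton] at hx hy
          refine ⟨hxy, ?_, ?_⟩ <;> omega
    · intro x y hxy hadj W hW
      by_contra hc
      push_neg at hc
      -- W has ≥ 4 elements, all < 4 and adjacent to both; but x,y nonadjacent
      -- In K4n, any w ∈ W: Adj x w means x,w < 4. So x < 4, y < 4, x ≠ y ⇒ Adj x y.
      obtain ⟨w, hw⟩ := Finset.card_pos.mp (by omega : 0 < W.card)
      have h1 := (hW w hw).1
      have h2 := (hW w hw).2
      exact hadj ⟨hxy, h1.2.1, h2.2.1⟩
  | subdivide G Fs a b c v hG hface hv ih =>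
    obtain ⟨ihF, ihW⟩ := ih
    have habc : ∀ x ∈ ({a, b, c} : Finset ℕ), ∀ y ∈ ({a, b, c} : Finset ℕ),
        x ≠ y → G.Adj x y := ihF _ hface
    have hmemabc : ∀ x : ℕ, x ∈ ({a, b, c} : Finset ℕ) ↔ (x = a ∨ x = b ∨ x = c) := by
      intro x; simp [Finset.mem_insert]
    constructor
    · intro t ht x hx y hy hxy
      simp only [Set.mem_union, Set.mem_diff, Set.mem_insert_iff,
        Set.mem_singleton_iff] at ht
      rcases ht with ⟨htF, _⟩ | rfl | rfl | rfl
      · exact addApex_adj.mpr (Or.inl (ihF t htF x hx y hy hxy))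
      all_goals
        simp only [Finset.mem_insert, Finset.mem_singleton] at hx hy
        rw [addApex_adj]
        rcases hx with rfl | rfl | rfl <;> rcases hy with rfl | rfl | rfl <;>
          first
            | exact absurd rfl hxy
            | (exact Or.inr ⟨hxy, Or.inl ⟨rfl, by tauto⟩⟩)
            | (exact Or.inr ⟨hxy, Or.inr ⟨rfl, by tauto⟩⟩)
            | (refine Or.inl (habc _ ?_ _ ?_ hxy) <;> simp [hmemabc])
    · intro x y hxy hadj W hW
      by_cases hxv : x = v
      · subst hxv
        have hsub : W ⊆ ({a, b, c} : Finset ℕ) := by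
          intro w hw
          have h1 := (hW w hw).1
          rw [addApex_adj] at h1
          rcases h1 with h1 | ⟨hne, ⟨_, h2⟩ | ⟨hwv, _⟩⟩
          · exact absurd h1 (hv w)
          · rw [hmemabc]; exact h2
          · exact absurd hwv.symm hne
        calc W.card ≤ ({a, b, c} : Finset ℕ).card := Finset.card_le_card hsub
          _ ≤ 3 := by
            apply le_trans (Finset.card_insert_le _ _)
            have := Finset.card_insert_le b ({c} : Finset ℕ)
            simp at this ⊢; omega
      · by_cases hyv : y = v
        · subst hyv
          have hsub : W ⊆ ({a, b, c} : Finset ℕ) := by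
            intro w hw
            have h1 := (hW w hw).2
            rw [addApex_adj] at h1
            rcases h1 with h1 | ⟨hne, ⟨_, h2⟩ | ⟨hwv, _⟩⟩
            · exact absurd h1 (hv w)
            · rw [hmemabc]; exact h2
            · exact absurd hwv.symm hne
          calc W.card ≤ ({a, b, c} : Finset ℕ).card := Finset.card_le_card hsub
            _ ≤ 3 := by
              apply le_trans (Finset.card_insert_le _ _)
              have := Finset.card_insert_le b ({c} : Finset ℕ)
              simp at this ⊢; omega
        · -- x, y ≠ v
          have hGadj : ¬ G.Adj x y := fun h => hadj (addApex_adj.mpr (Or.inl h))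
          have hvW : v ∉ W := by
            intro hvW
            have h1 := (hW v hvW).1
            have h2 := (hW v hvW).2
            rw [addApex_adj] at h1 h2
            have hx3 : x = a ∨ x = b ∨ x = c := by
              rcases h1 with h1 | ⟨hne, ⟨rfl, _⟩ | ⟨_, h⟩⟩
              · exact absurd h1.symm (hv x)
              · exact absurd rfl hxv
              · exact h
            have hy3 : y = a ∨ y = b ∨ y = c := by
              rcases h2 with h2 | ⟨hne, ⟨rfl, _⟩ | ⟨_, h⟩⟩
              · exact absurd h2.symm (hv y)
              · exact absurd rfl hyv
              · exact h
            exact hGadj (habc x (by rw [hmemabc]; exact hx3)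
              y (by rw [hmemabc]; exact hy3) hxy)
          refine ihW x y hxy hGadj W ?_
          intro w hw
          have hwv : w ≠ v := fun h => hvW (h ▸ hw)
          have h1 := (hW w hw).1
          have h2 := (hW w hw).2
          rw [addApex_adj] at h1 h2
          constructor
          · rcases h1 with h1 | ⟨_, ⟨rfl, _⟩ | ⟨rfl, _⟩⟩
            · exact h1
            · exact absurd rfl hxv
            · exact absurd rfl hwv
          · rcases h2 with h2 | ⟨_, ⟨rfl, _⟩ | ⟨rfl, _⟩⟩
            · exact h2
            · exact absurd rfl hyv
            · exact absurd rfl hwv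

/-- For `m ≥ 3`, an Apollonian network `T` contains no subgraph
isomorphic to `K_{2,2m-1}` in which the two vertices of the partition set of size two
are not adjacent in `T`. -/
theorem stmt_3 (T : SimpleGraph ℕ) (hT : IsApollonian T) (m : ℕ) (hm : 3 ≤ m) :
    ¬ ∃ (a b : ℕ) (W : Finset ℕ), a ≠ b ∧ ¬ T.Adj a b ∧
      W.card = 2 * m - 1 ∧ a ∉ W ∧ b ∉ W ∧
      ∀ x ∈ W, T.Adj a x ∧ T.Adj b x := by
  rintro ⟨a, b, W, hab, hadj, hcard, _, _, hW⟩
  obtain ⟨Fs, hF⟩ := hT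
  have h3 := (apollonian_key hF).2 a b hab hadj W hW
  omega
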